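/- arXiv:2104.06345 — 8 statements merged into one kernel-verified Lean document; each statement's English description precedes it below -/
import Mathlib

section
/- For every real x, −x²/2 ≤ Φ(x) ≤ 0. -/
/-- Φ(x) = −(|x|·√(x²−2))/2 + ln((|x|+√(x²−2))/√2) when |x| ≥ √2, and 0 when |x| < √2. -/
noncomputable def Phi (x : ℝ) : ℝ :=
  if Real.sqrt 2 ≤ |x| then
    -(|x| * Real.sqrt (x ^ 2 - 2)) / 2 +
      Real.log ((|x| + Real.sqrt (x ^ 2 - 2)) / Real.sqrt 2)
  else 0

/-- For every real x, −x²/2 ≤ Φ(x) ≤ 0. -/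
theorem stmt_0 : ∀ x : ℝ, -x ^ 2 / 2 ≤ Phi x ∧ Phi x ≤ 0 := by
  intro x
  unfold Phi
  by_cases h : Real.sqrt 2 ≤ |x|
  · rw [if_pos h]
    set a := |x| with ha
    set s := Real.sqrt (x ^ 2 - 2) with hs
    have h2 : (0:ℝ) ≤ 2 := by norm_num
    have hsq2 : (0:ℝ) < Real.sqrt 2 := Real.sqrt_pos.mpr (by norm_num)
    have ha0 : 0 < a := lt_of_lt_of_le hsq2 h
    have hx2 : 2 ≤ x ^ 2 := by
      have := Real.sqrt_le_sqrt (le_of_eq (sq_abs x).symm) -- dummy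
      nlinarith [Real.sq_sqrt h2, sq_abs x, mul_self_le_mul_self (le_of_lt hsq2) h]
    have hs0 : 0 ≤ s := Real.sqrt_nonneg _
    have hss : s ^ 2 = x ^ 2 - 2 := Real.sq_sqrt (by linarith)
    have haa : a ^ 2 = x ^ 2 := sq_abs x
    have hsa : s ≤ a := by nlinarith
    have ht1 : 1 ≤ (a + s) / Real.sqrt 2 := by
      rw [le_div_iff₀ hsq2]
      nlinarith [Real.sq_sqrt h2]
    have ht0 : 0 < (a + s) / Real.sqrt 2 := lt_of_lt_of_le one_pos ht1
    have hlog0 : 0 ≤ Real.log ((a + s) / Real.sqrt 2) := Real.log_nonneg ht1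
    have hinv : ((a + s) / Real.sqrt 2)⁻¹ = (a - s) / Real.sqrt 2 := by
      refine inv_eq_of_mul_eq_one_right ?_
      field_simp
      nlinarith [Real.sq_sqrt h2]
    have hsinh : Real.sinh (Real.log ((a + s) / Real.sqrt 2)) = s / Real.sqrt 2 := by
      rw [Real.sinh_eq, Real.exp_log ht0, Real.exp_neg, Real.exp_log ht0, hinv]
      field_simp
      ring
    constructor
    · -- lower bound
      have : -x ^ 2 / 2 ≤ -(a * s) / 2 := by nlinarith
      linarith
    · -- upper bound
      have h1 : Real.log ((a + s) / Real.sqrt 2) ≤ s / Real.sqrt 2 := by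
        rw [← hsinh]
        exact Real.self_le_sinh_iff.mpr hlog0
      have h2' : s / Real.sqrt 2 ≤ a * s / 2 := by
        rw [div_le_iff₀ hsq2, div_mul_eq_mul_div, le_div_iff₀ (by norm_num : (0:ℝ) < 2)]
        nlinarith [Real.sq_sqrt h2, mul_le_mul_of_nonneg_right (mul_le_mul_of_nonneg_left h hs0) hsq2.le]
      linarith
  · rw [if_neg h]
    constructor
    · nlinarith [sq_nonneg x]
    · exact le_refl 0
end

section
/- The function Φ is differentiable on all of ℝ (including at the points ±√2), and its derivative is Φ′(x) = −sgn(x)·√(x²−2) when |x| ≥ √2 and Φ′(x) = 0 when |x| < √2. -/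
open Real Set Filter Topology

noncomputable def phiF (y : ℝ) : ℝ :=
  -(y * Real.sqrt (y ^ 2 - 2)) / 2 + Real.log ((y + Real.sqrt (y ^ 2 - 2)) / Real.sqrt 2)

lemma sqrt2_pos : (0:ℝ) < Real.sqrt 2 := Real.sqrt_pos.2 (by norm_num)

lemma sqrt2_sq : Real.sqrt 2 ^ 2 = 2 := Real.sq_sqrt (by norm_num)

lemma phiF_deriv {x : ℝ} (hx : Real.sqrt 2 < x) :
    HasDerivAt phiF (-Real.sqrt (x ^ 2 - 2)) x := by
  have hx0 : 0 < x := lt_trans sqrt2_pos hx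
  have h2 : (2:ℝ) < x ^ 2 := by nlinarith [hx, sqrt2_pos, sqrt2_sq]
  have hr0 : 0 < x ^ 2 - 2 := by linarith
  set r := Real.sqrt (x ^ 2 - 2) with hr
  have hrpos : 0 < r := Real.sqrt_pos.2 hr0
  have hr2 : r ^ 2 = x ^ 2 - 2 := Real.sq_sqrt hr0.le
  have hq : HasDerivAt (fun y : ℝ => y ^ 2 - 2) (2 * x) x := by
    simpa using ((hasDerivAt_pow 2 x).sub_const 2)
  have hg : HasDerivAt (fun y : ℝ => Real.sqrt (y ^ 2 - 2)) (x / r) x := by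
    have := (Real.hasDerivAt_sqrt (ne_of_gt hr0)).comp x hq
    refine this.congr_deriv ?_
    symm
    field_simp
    ring
  have h1 : HasDerivAt (fun y : ℝ => -(y * Real.sqrt (y ^ 2 - 2)) / 2)
      (-(1 * r + x * (x / r)) / 2) x :=
    ((hasDerivAt_id x).mul hg).neg.div_const 2
  have hsum : 0 < x + r := by positivity
  have h2' : HasDerivAt (fun y : ℝ => Real.log ((y + Real.sqrt (y ^ 2 - 2)) / Real.sqrt 2))
      (((1 + x / r) / Real.sqrt 2) / ((x + r) / Real.sqrt 2)) x := by
    have hin : HasDerivAt (fun y : ℝ => (y + Real.sqrt (y ^ 2 - 2)) / Real.sqrt 2)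
        ((1 + x / r) / Real.sqrt 2) x := ((hasDerivAt_id x).add hg).div_const _
    exact hin.log (by positivity)
  have := h1.add h2'
  refine this.congr_deriv ?_
  symm
  have hs2 : Real.sqrt 2 ≠ 0 := ne_of_gt sqrt2_pos
  field_simp
  linear_combination (-x - r) * hr2

lemma phiF_sqrt2 : phiF (Real.sqrt 2) = 0 := by
  have : Real.sqrt 2 ^ 2 - 2 = 0 := by rw [sqrt2_sq]; ring
  simp [phiF, this, Real.sqrt_zero, div_self (ne_of_gt sqrt2_pos)]

lemma phiF_boundary : HasDerivWithinAt phiF 0 (Ici (Real.sqrt 2)) (Real.sqrt 2) := by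
  apply hasDerivWithinAt_Ici_of_tendsto_deriv (s := Ioi (Real.sqrt 2))
  · exact fun y hy => ((phiF_deriv hy).differentiableAt).differentiableWithinAt
  · apply ContinuousAt.continuousWithinAt
    have hsq : ContinuousAt (fun y : ℝ => Real.sqrt (y ^ 2 - 2)) (Real.sqrt 2) :=
      (Real.continuous_sqrt.comp (by continuity)).continuousAt
    have harg : ContinuousAt (fun y : ℝ => (y + Real.sqrt (y ^ 2 - 2)) / Real.sqrt 2)
        (Real.sqrt 2) := (continuousAt_id.add hsq).div_const _
    have hval : (Real.sqrt 2 + Real.sqrt (Real.sqrt 2 ^ 2 - 2)) / Real.sqrt 2 ≠ 0 := by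
      have : Real.sqrt 2 ^ 2 - 2 = 0 := by rw [sqrt2_sq]; ring
      rw [this, Real.sqrt_zero, add_zero, div_self (ne_of_gt sqrt2_pos)]
      norm_num
    exact ((continuousAt_id.mul hsq).neg.div_const 2).add (harg.log hval)
  · exact self_mem_nhdsWithin
  · have heq : ∀ᶠ y in 𝓝[>] (Real.sqrt 2), deriv phiF y = -Real.sqrt (y ^ 2 - 2) := by
      filter_upwards [self_mem_nhdsWithin] with y hy
      exact (phiF_deriv hy).deriv
    rw [tendsto_congr' heq]
    have : Tendsto (fun y : ℝ => -Real.sqrt (y ^ 2 - 2)) (𝓝 (Real.sqrt 2))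
        (𝓝 (-Real.sqrt (Real.sqrt 2 ^ 2 - 2))) :=
      ((Real.continuous_sqrt.comp (by continuity)).neg).continuousAt
    have hval : -Real.sqrt (Real.sqrt 2 ^ 2 - 2) = 0 := by
      have : Real.sqrt 2 ^ 2 - 2 = 0 := by rw [sqrt2_sq]; ring
      rw [this, Real.sqrt_zero, neg_zero]
    rw [hval] at this
    exact this.mono_left nhdsWithin_le_nhds

lemma phi_even (x : ℝ) : Phi (-x) = Phi x := by
  simp [Phi, abs_neg, neg_sq]

lemma phi_eq_phiF {y : ℝ} (hy : Real.sqrt 2 ≤ y) : Phi y = phiF y := by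
  have h0 : 0 ≤ y := le_trans sqrt2_pos.le hy
  rw [Phi, if_pos (by rwa [abs_of_nonneg h0]), abs_of_nonneg h0, phiF]

lemma phi_sqrt2 : Phi (Real.sqrt 2) = 0 := by
  rw [phi_eq_phiF le_rfl, phiF_sqrt2]

lemma key (x : ℝ) : HasDerivAt Phi
    (if Real.sqrt 2 ≤ |x| then -Real.sign x * Real.sqrt (x ^ 2 - 2) else 0) x := by
  have main : ∀ x : ℝ, 0 ≤ x → HasDerivAt Phi
      (if Real.sqrt 2 ≤ |x| then -Real.sign x * Real.sqrt (x ^ 2 - 2) else 0) x := by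
    intro x hx0
    rcases lt_trichotomy x (Real.sqrt 2) with h | h | h
    · -- |x| < √2 : locally zero
      have habs : |x| < Real.sqrt 2 := by rwa [abs_of_nonneg hx0]
      rw [if_neg (not_le.2 habs)]
      have hU : IsOpen {y : ℝ | |y| < Real.sqrt 2} := isOpen_lt continuous_abs continuous_const
      have hmem : {y : ℝ | |y| < Real.sqrt 2} ∈ 𝓝 x := hU.mem_nhds habs
      refine (hasDerivAt_const x (0:ℝ)).congr_of_eventuallyEq ?_
      filter_upwards [hmem] with y hy
      simp [Phi, not_le.2 hy]
    · -- x = √2 : boundary point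
      subst h
      have hif : Real.sqrt 2 ≤ |Real.sqrt 2| := by rw [abs_of_nonneg sqrt2_pos.le]
      rw [if_pos hif]
      have hval : -Real.sign (Real.sqrt 2) * Real.sqrt (Real.sqrt 2 ^ 2 - 2) = 0 := by
        have : Real.sqrt 2 ^ 2 - 2 = 0 := by rw [sqrt2_sq]; ring
        rw [this, Real.sqrt_zero, mul_zero]
      rw [hval]
      have hIci : HasDerivWithinAt Phi 0 (Ici (Real.sqrt 2)) (Real.sqrt 2) :=
        phiF_boundary.congr (fun y hy => phi_eq_phiF hy) (by rw [phi_sqrt2, phiF_sqrt2])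
      have hIic : HasDerivWithinAt Phi 0 (Iic (Real.sqrt 2)) (Real.sqrt 2) := by
        refine (hasDerivWithinAt_const _ _ (0:ℝ)).congr_of_eventuallyEq ?_ phi_sqrt2
        have hmem : Ioi (-Real.sqrt 2) ∈ 𝓝[Iic (Real.sqrt 2)] (Real.sqrt 2) :=
          mem_nhdsWithin_of_mem_nhds (Ioi_mem_nhds (by linarith [sqrt2_pos]))
        filter_upwards [hmem, self_mem_nhdsWithin] with y h1 h2
        rcases eq_or_lt_of_le (show y ≤ Real.sqrt 2 from h2) with rfl | hlt
        · exact phi_sqrt2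
        · have : |y| < Real.sqrt 2 := abs_lt.2 ⟨h1, hlt⟩
          simp [Phi, not_le.2 this]
      have := hIic.union hIci
      rwa [Iic_union_Ici, hasDerivWithinAt_univ] at this
    · -- x > √2
      have habs : Real.sqrt 2 ≤ |x| := by rw [abs_of_nonneg hx0]; exact h.le
      rw [if_pos habs, Real.sign_of_pos (lt_trans sqrt2_pos h)]
      have heq : Phi =ᶠ[𝓝 x] phiF := by
        filter_upwards [Ioi_mem_nhds h] with y hy
        exact phi_eq_phiF (le_of_lt hy)
      have := (phiF_deriv h).congr_of_eventuallyEq heq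
      refine this.congr_deriv ?_
      symm
      ring
  rcases le_or_gt 0 x with hx | hx
  · exact main x hx
  · have hneg := main (-x) (by linarith)
    have hcomp := hneg.comp x (hasDerivAt_neg x)
    have hfun : (Phi ∘ fun y : ℝ => -y) = Phi := funext fun y => phi_even y
    rw [hfun] at hcomp
    refine hcomp.congr_deriv ?_
    symm
    have h1 : |(-x)| = |x| := abs_neg x
    have h2 : (-x) ^ 2 = x ^ 2 := neg_sq x
    rw [h1, h2]
    by_cases hc : Real.sqrt 2 ≤ |x|
    · rw [if_pos hc, if_pos hc, Real.sign_of_neg hx,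
        Real.sign_of_pos (show (0:ℝ) < -x by linarith)]
      ring
    · rw [if_neg hc, if_neg hc]; ring

/-- Φ is differentiable on all of ℝ, and Φ′(x) = −sgn(x)·√(x²−2) when |x| ≥ √2,
Φ′(x) = 0 when |x| < √2. -/
theorem stmt_2 : Differentiable ℝ Phi ∧
    ∀ x : ℝ, deriv Phi x =
      if Real.sqrt 2 ≤ |x| then -Real.sign x * Real.sqrt (x ^ 2 - 2) else 0 := by
  exact ⟨fun x => (key x).differentiableAt, fun x => (key x).deriv⟩
end

section
/- For every z with 0 < z ≤ 1, setting x = (z + 1/z)/√2 one has x ≥ √2 and x²/2 + Φ(x) = 1/2 + z²/2 − ln z. -/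
/-- For every z with 0 < z ≤ 1, setting x = (z + 1/z)/√2 one has x ≥ √2 and
x²/2 + Φ(x) = 1/2 + z²/2 − ln z. -/
theorem stmt_4 : ∀ z : ℝ, 0 < z → z ≤ 1 →
    Real.sqrt 2 ≤ (z + 1 / z) / Real.sqrt 2 ∧
    ((z + 1 / z) / Real.sqrt 2) ^ 2 / 2 + Phi ((z + 1 / z) / Real.sqrt 2) =
      1 / 2 + z ^ 2 / 2 - Real.log z := by
  intro z hz hz1
  have hs : (0:ℝ) < Real.sqrt 2 := Real.sqrt_pos.mpr (by norm_num)
  have hs2 : Real.sqrt 2 ^ 2 = 2 := Real.sq_sqrt (by norm_num)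
  have hss : Real.sqrt 2 * Real.sqrt 2 = 2 := Real.mul_self_sqrt (by norm_num)
  have hge : 2 ≤ z + 1 / z := by
    have h1 : z * (1 / z) = 1 := by field_simp
    nlinarith [sq_nonneg (z - 1)]
  have hxge : Real.sqrt 2 ≤ (z + 1 / z) / Real.sqrt 2 := by
    rw [le_div_iff₀ hs]
    nlinarith
  set x := (z + 1 / z) / Real.sqrt 2 with hxdef
  have hx0 : 0 ≤ x := le_trans hs.le hxge
  have habs : |x| = x := abs_of_nonneg hx0
  have htz : 0 ≤ 1 / z - z := by
    have : z ≤ 1 / z := by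
      rw [le_div_iff₀ hz]; nlinarith
    linarith
  have ht0 : 0 ≤ (1 / z - z) / Real.sqrt 2 := div_nonneg htz hs.le
  have hsq : x ^ 2 - 2 = ((1 / z - z) / Real.sqrt 2) ^ 2 := by
    rw [hxdef, div_pow, div_pow, hs2]
    field_simp
    ring
  have hrt : Real.sqrt (x ^ 2 - 2) = (1 / z - z) / Real.sqrt 2 := by
    rw [hsq, Real.sqrt_sq ht0]
  have hlogarg : (x + (1 / z - z) / Real.sqrt 2) / Real.sqrt 2 = 1 / z := by
    rw [hxdef, ← add_div, div_div, hss]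
    field_simp
    ring
  have hx2 : x ^ 2 = (z + 1 / z) ^ 2 / 2 := by rw [hxdef, div_pow, hs2]
  have hxt : x * ((1 / z - z) / Real.sqrt 2) = (z + 1 / z) * (1 / z - z) / 2 := by
    rw [hxdef, div_mul_div_comm, hss]
  rw [Phi, habs, if_pos hxge, hrt, hlogarg, hxt, hx2,
    Real.log_div one_ne_zero hz.ne', Real.log_one]
  refine ⟨hxge, ?_⟩
  field_simp
  ring
end

section
/- There exist a constant c₁ ∈ ℝ and a constant c₂ > 0 (depending only on ξ′, ξ″, h) such that for all x ∈ ℝ and γ ∈ (−1,1), F(x,γ) ≤ (1/2)·ln(1−γ²) + c₁ − c₂·x². -/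
/-- F(x,γ) = (1/2)·ln(1−γ²) + h²γ²/(2ξ′) − x²/(2(ξ′+ξ″)) + (x+hγ)²/(4ξ″)
+ Φ((x+hγ)/√(2ξ″)). -/
noncomputable def F (ξ' ξ'' h x γ : ℝ) : ℝ :=
  (1 / 2) * Real.log (1 - γ ^ 2) + h ^ 2 * γ ^ 2 / (2 * ξ') -
    x ^ 2 / (2 * (ξ' + ξ'')) + (x + h * γ) ^ 2 / (4 * ξ'') +
    Phi ((x + h * γ) / Real.sqrt (2 * ξ''))

lemma phi_add_half_sq_le (ε : ℝ) (hε : 0 < ε) (y : ℝ) :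
    Phi y + y ^ 2 / 2 ≤ ε * y ^ 2 + 1 + 1 / (2 * ε) := by
  have h2 : (Real.sqrt 2) ^ 2 = 2 := Real.sq_sqrt (by norm_num)
  have ht0 : (0:ℝ) < Real.sqrt 2 := Real.sqrt_pos.mpr (by norm_num)
  set t := Real.sqrt 2 with htdef
  unfold Phi
  rw [← htdef]
  split_ifs with hy
  · set a := |y| with ha
    have ha2 : a ^ 2 = y ^ 2 := sq_abs y
    have ha0 : 0 < a := lt_of_lt_of_le ht0 hy
    have hy2 : 0 ≤ y ^ 2 - 2 := by nlinarith
    set s := Real.sqrt (y ^ 2 - 2) with hs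
    have hs0 : 0 ≤ s := Real.sqrt_nonneg _
    have hs2 : s ^ 2 = y ^ 2 - 2 := Real.sq_sqrt hy2
    have hsa : s ≤ a := by nlinarith
    have hpos : 0 < (a + s) / t := by positivity
    have hlog : Real.log ((a + s) / t) ≤ (a + s) / t - 1 :=
      Real.log_le_sub_one_of_pos hpos
    have hdiv : (a + s) / t = (a + s) * t / 2 := by
      field_simp
      nlinarith
    have key : t * a ≤ ε * a ^ 2 + 1 / (2 * ε) := by
      rw [← sub_nonneg]
      have hprod : 0 ≤ (ε * a ^ 2 + 1 / (2 * ε) - t * a) * (2 * ε) := by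
        have heq : (ε * a ^ 2 + 1 / (2 * ε) - t * a) * (2 * ε)
            = 2 * ε ^ 2 * a ^ 2 + 1 - 2 * ε * (t * a) := by
          field_simp
        rw [heq]; nlinarith [sq_nonneg (2 * ε * a - t)]
      nlinarith [hprod]
    have key2 : a ^ 2 - a * s ≤ 2 := by nlinarith [mul_nonneg hs0 (sub_nonneg.mpr hsa)]
    have h5 : s * t ≤ a * t := mul_le_mul_of_nonneg_right hsa ht0.le
    have ha2' : ε * a ^ 2 = ε * y ^ 2 := by rw [ha2]
    rw [hdiv] at hlog ⊢
    linarith [hlog, key, key2, h5, ha2, ha2']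
  · have hlt : y ^ 2 < 2 := by nlinarith [sq_abs y, abs_nonneg y, (not_le.mp hy)]
    have h1 : 0 ≤ ε * y ^ 2 := by positivity
    have h2' : 0 < 1 / (2 * ε) := by positivity
    linarith

/-- There exist constants c₁ ∈ ℝ and c₂ > 0 (depending only on ξ′, ξ″, h) such that for
all x ∈ ℝ and γ ∈ (−1,1), F(x,γ) ≤ (1/2)·ln(1−γ²) + c₁ − c₂·x². -/
theorem stmt_5 (ξ' ξ'' h : ℝ) (hξ' : 0 < ξ') (hξ'' : 0 < ξ'') (hh : 0 ≤ h) :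
    ∃ c₁ c₂ : ℝ, 0 < c₂ ∧ ∀ x γ : ℝ, -1 < γ → γ < 1 →
      F ξ' ξ'' h x γ ≤ (1 / 2) * Real.log (1 - γ ^ 2) + c₁ - c₂ * x ^ 2 := by
  have hS0 : 0 < ξ' + ξ'' := by positivity
  set ε := ξ'' / (8 * (ξ' + ξ'')) with hεdef
  have hε : 0 < ε := by positivity
  refine ⟨h ^ 2 / (2 * ξ') + h ^ 2 / (8 * (ξ' + ξ'')) + 1 + 1 / (2 * ε),
    3 / (8 * (ξ' + ξ'')), by positivity, ?_⟩
  intro x γ hγ1 hγ2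
  have hγsq : γ ^ 2 ≤ 1 := by nlinarith
  have h2ξ : (0:ℝ) < 2 * ξ'' := by positivity
  have hy2 : ((x + h * γ) / Real.sqrt (2 * ξ'')) ^ 2 = (x + h * γ) ^ 2 / (2 * ξ'') := by
    rw [div_pow, Real.sq_sqrt h2ξ.le]
  have hb := phi_add_half_sq_le ε hε ((x + h * γ) / Real.sqrt (2 * ξ''))
  rw [hy2] at hb
  have hεe : ε * ((x + h * γ) ^ 2 / (2 * ξ'')) = (x + h * γ) ^ 2 / (16 * (ξ' + ξ'')) := by
    rw [hεdef]; field_simp; ring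
  rw [hεe] at hb
  have hhalf : (x + h * γ) ^ 2 / (2 * ξ'') / 2 = (x + h * γ) ^ 2 / (4 * ξ'') := by
    rw [div_div, show (2 * ξ'') * 2 = 4 * ξ'' by ring]
  rw [hhalf] at hb
  have key : 0 ≤ 8 * (ξ' + ξ'') * h ^ 2 * (1 - γ ^ 2) + ξ' * (x - h * γ) ^ 2
      + 2 * ξ' * h ^ 2 * (1 - γ ^ 2) := by
    have h1 : 0 ≤ 1 - γ ^ 2 := by linarith
    have h2 : 0 ≤ ξ' * (x - h * γ) ^ 2 := by positivity
    nlinarith [mul_nonneg (mul_nonneg (by positivity : (0:ℝ) ≤ 8 * (ξ' + ξ'') * h ^ 2) h1) (le_refl (0:ℝ)), mul_nonneg (by positivity : (0:ℝ) ≤ 8 * (ξ' + ξ'') * h ^ 2) h1, mul_nonneg (by positivity : (0:ℝ) ≤ 2 * ξ' * h ^ 2) h1]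
  have hard : h ^ 2 * γ ^ 2 / (2 * ξ') - x ^ 2 / (2 * (ξ' + ξ''))
      + (x + h * γ) ^ 2 / (16 * (ξ' + ξ''))
      ≤ h ^ 2 / (2 * ξ') + h ^ 2 / (8 * (ξ' + ξ'')) - 3 / (8 * (ξ' + ξ'')) * x ^ 2 := by
    rw [← sub_nonneg]
    have heq : h ^ 2 / (2 * ξ') + h ^ 2 / (8 * (ξ' + ξ'')) - 3 / (8 * (ξ' + ξ'')) * x ^ 2
        - (h ^ 2 * γ ^ 2 / (2 * ξ') - x ^ 2 / (2 * (ξ' + ξ''))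
          + (x + h * γ) ^ 2 / (16 * (ξ' + ξ'')))
        = (8 * (ξ' + ξ'') * h ^ 2 * (1 - γ ^ 2) + ξ' * (x - h * γ) ^ 2
          + 2 * ξ' * h ^ 2 * (1 - γ ^ 2)) / (16 * (ξ' + ξ'') * ξ') := by
      field_simp; ring
    rw [heq]
    exact div_nonneg key (by positivity)
  unfold F
  linarith [hb, hard]
end

section
/- If h² > ξ″ − ξ′, then F attains its maximum over ℝ×(−1,1) exactly at the two points (x*,γ*) and (−x*,−γ*); that is, F(x,γ) < F(x*,γ*) for every (x,γ) ∈ ℝ×(−1,1) other than ±(x*,γ*), and the maximum value equals h²/(2ξ′) − (1/2)·ln(ξ″/ξ′). -/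
/-- γ* = h/√(ξ′+h²). -/
noncomputable def γstar (ξ' h : ℝ) : ℝ := h / Real.sqrt (ξ' + h ^ 2)

/-- x* = (ξ′+ξ″)/√(ξ′+h²). -/
noncomputable def xstar (ξ' ξ'' h : ℝ) : ℝ := (ξ' + ξ'') / Real.sqrt (ξ' + h ^ 2)


lemma phi_aux (ρ : ℝ) (hρ : 1 < ρ) (d : ℝ) (hd : 1 ≤ d) :
    Real.log d - Real.log ρ ≤ (d + 1 - ρ - ρ/d)/(ρ+1) ∧
    (d ≠ ρ → Real.log d - Real.log ρ < (d + 1 - ρ - ρ/d)/(ρ+1)) := by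
  have hρ0 : (0:ℝ) < ρ := by linarith
  set f : ℝ → ℝ := fun y => (y + 1 - ρ - ρ/y)/(ρ+1) - Real.log y + Real.log ρ with hf
  have hder : ∀ x : ℝ, 0 < x → HasDerivAt f ((x-1)*(x-ρ)/(x^2*(ρ+1))) x := by
    intro x hx
    have h1 : HasDerivAt (fun y : ℝ => y + 1 - ρ - ρ/y)
        (1 - ρ * (-(x^2)⁻¹)) x := by
      have ha := (((hasDerivAt_id x).add_const 1).sub_const ρ).sub
        ((hasDerivAt_inv hx.ne').const_mul ρ)
      simpa [Pi.sub_def, div_eq_mul_inv] using ha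
    have h2 := ((h1.div_const (ρ+1)).sub (Real.hasDerivAt_log hx.ne')).add_const
        (Real.log ρ)
    refine HasDerivAt.congr_deriv h2 ?_
    field_simp
    ring
  have hcont : ∀ x : ℝ, 0 < x → ContinuousAt f x := fun x hx => (hder x hx).continuousAt
  have hfρ : f ρ = 0 := by
    simp only [hf]
    rw [div_self hρ0.ne']
    ring
  have hanti : StrictAntiOn f (Set.Icc 1 ρ) := by
    apply strictAntiOn_of_deriv_neg (convex_Icc 1 ρ)
    · exact fun x hx => (hcont x (by have := hx.1; linarith)).continuousWithinAt
    · intro x hx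
      rw [interior_Icc] at hx
      have hx0 : 0 < x := by linarith [hx.1]
      rw [(hder x hx0).deriv]
      apply div_neg_of_neg_of_pos
      · nlinarith [hx.1, hx.2]
      · positivity
  have hmono : StrictMonoOn f (Set.Ici ρ) := by
    apply strictMonoOn_of_deriv_pos (convex_Ici ρ)
    · exact fun x hx => (hcont x (by have : ρ ≤ x := hx; linarith)).continuousWithinAt
    · intro x hx
      rw [interior_Ici] at hx
      have hxρ : ρ < x := hx
      have hx0 : 0 < x := by linarith
      rw [(hder x hx0).deriv]
      apply div_pos
      · nlinarith
      · positivity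
  have key : d ≠ ρ → 0 < f d := by
    intro hne
    rcases lt_or_gt_of_ne hne with h | h
    · have := hanti ⟨hd, h.le⟩ ⟨hρ.le, le_refl ρ⟩ h
      rw [hfρ] at this; linarith
    · have := hmono (Set.mem_Ici.mpr (le_refl ρ)) (Set.mem_Ici.mpr h.le) h
      rw [hfρ] at this; linarith
  constructor
  · rcases eq_or_ne d ρ with rfl | hne
    · rw [div_self hρ0.ne']; simp
    · have := key hne; simp only [hf] at this; linarith
  · intro hne; have := key hne; simp only [hf] at this; linarith

lemma psi_le (ρ u : ℝ) (hρ : 1 < ρ) :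
    u^2/2 + Phi u ≤ u^2/(ρ+1) + Real.log ρ / 2 ∧
    (u^2 ≠ (ρ+1)^2/(2*ρ) → u^2/2 + Phi u < u^2/(ρ+1) + Real.log ρ / 2) := by
  have hρ0 : (0:ℝ) < ρ := by linarith
  have hs2 : Real.sqrt 2 ^ 2 = 2 := Real.sq_sqrt (by norm_num)
  have hs2pos : (0:ℝ) < Real.sqrt 2 := Real.sqrt_pos.mpr (by norm_num)
  by_cases hu : Real.sqrt 2 ≤ |u|
  · -- case |u| ≥ √2
    have hm2 : |u|^2 = u^2 := sq_abs u
    set m : ℝ := |u| with hmdef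
    have hm0 : 0 < m := lt_of_lt_of_le hs2pos hu
    have hu2 : 2 ≤ u^2 := by nlinarith
    set w := Real.sqrt (u^2 - 2) with hw
    have hw0 : 0 ≤ w := Real.sqrt_nonneg _
    have hw2 : w^2 = u^2 - 2 := Real.sq_sqrt (by linarith)
    set d := ((m + w)/Real.sqrt 2)^2 with hd
    have hd_eq : d = u^2 - 1 + m*w := by
      rw [hd, div_pow, hs2]
      nlinarith
    have hlog : Real.log ((m + w)/Real.sqrt 2) = Real.log d / 2 := by
      rw [hd, Real.log_pow]
      push_cast; ring
    have hPhi : Phi u = -(m * w) / 2 + Real.log d / 2 := by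
      rw [Phi, if_pos hu, hlog]
    clear_value d
    clear_value w
    clear_value m
    have hd1 : 1 ≤ d := by nlinarith
    have hd0 : 0 < d := by linarith
    have hdinv : d * (u^2 - 1 - m*w) = 1 := by
      rw [hd_eq]; nlinarith
    have hρd : ρ/d = ρ*(u^2 - 1 - m*w) := by
      rw [div_eq_iff hd0.ne']
      nlinarith [hdinv]
    obtain ⟨hle, hlt⟩ := phi_aux ρ hρ d hd1
    have hiden : u^2/2 - m*w/2 + (1/2)*((d + 1 - ρ - ρ/d)/(ρ+1)) = u^2/(ρ+1) := by
      rw [hρd, hd_eq]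
      field_simp
      ring
    constructor
    · rw [hPhi]; linarith [hle, hiden]
    · intro hne
      have hdρ : d ≠ ρ := by
        intro heq
        apply hne
        have hinv1 : (1:ℝ)/d = u^2 - 1 - m*w := by
          rw [div_eq_iff hd0.ne']; linear_combination -hdinv
        have h1 : u^2 = (d + 1/d + 2)/2 := by
          rw [hinv1, hd_eq]; ring
        rw [h1, heq]
        field_simp
        ring
      have hlt' := hlt hdρ
      rw [hPhi]; linarith [hiden]
  · -- case |u| < √2
    have h1 : |u| < Real.sqrt 2 := lt_of_not_ge hu
    have hu2 : u^2 < 2 := by nlinarith [sq_abs u, abs_nonneg u]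
    have hPhi : Phi u = 0 := by rw [Phi, if_neg hu]
    obtain ⟨hle, _⟩ := phi_aux ρ hρ 1 le_rfl
    have h2 : 2*(ρ-1)/(ρ+1) ≤ Real.log ρ := by
      have heq : (1 + 1 - ρ - ρ/1)/(ρ+1) = -(2*(ρ-1)/(ρ+1)) := by ring
      rw [heq, Real.log_one] at hle
      linarith
    have hstrict : u^2/2 + Phi u < u^2/(ρ+1) + Real.log ρ / 2 := by
      rw [hPhi]
      have key : u^2/2 - u^2/(ρ+1) < (ρ-1)/(ρ+1) := by
        rw [div_sub_div _ _ (by norm_num : (2:ℝ) ≠ 0) (by linarith : ρ+1 ≠ 0)]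
        rw [div_lt_div_iff₀ (by linarith) (by linarith)]
        nlinarith [mul_pos (mul_pos (sub_pos.mpr hu2) (by linarith : (0:ℝ) < ρ-1))
          (by linarith : (0:ℝ) < ρ+1)]
      have h3 : 2*(ρ-1)/(ρ+1) = 2*((ρ-1)/(ρ+1)) := by ring
      linarith
    exact ⟨hstrict.le, fun _ => hstrict⟩

lemma Fbound (ξ' ξ'' h x γ : ℝ) (hξ' : 0 < ξ') (hξ'' : 0 < ξ'')
    (hgt : ξ'' - ξ' < h^2) (hγ : γ^2 < 1) :
    F ξ' ξ'' h x γ ≤ h^2/(2*ξ') - (1/2)*Real.log (ξ''/ξ') ∧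
    (¬((x + h*γ)^2 = (ξ'+h^2+ξ'')^2/(ξ'+h^2) ∧ h*x = (ξ'+ξ'')*γ) →
      F ξ' ξ'' h x γ < h^2/(2*ξ') - (1/2)*Real.log (ξ''/ξ')) := by
  have hβ : 0 < 1 - γ^2 := by linarith
  set a := ξ' + h^2 with hadef
  have ha : 0 < a := by nlinarith
  have hba : ξ'' < a := by rw [hadef]; linarith
  set s := ξ' + ξ'' with hsdef
  have hs : 0 < s := by positivity
  set ρ := a / ξ'' with hρdef
  have hρ : 1 < ρ := (one_lt_div hξ'').mpr hba
  set u := (x + h*γ) / Real.sqrt (2*ξ'') with hudef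
  have hsq : Real.sqrt (2*ξ'') ^ 2 = 2*ξ'' := Real.sq_sqrt (by positivity)
  have hu2 : u^2 = (x + h*γ)^2 / (2*ξ'') := by rw [hudef, div_pow, hsq]
  obtain ⟨hpsi_le, hpsi_lt⟩ := psi_le ρ u hρ
  have hu2' : (x + h*γ)^2 / (4*ξ'') = u^2/2 := by rw [hu2]; ring
  have hF : F ξ' ξ'' h x γ = (1/2)*Real.log (1-γ^2) + h^2*γ^2/(2*ξ') - x^2/(2*s)
      + (u^2/2 + Phi u) := by
    rw [F, hu2']; ring
  have hρ1 : u^2/(ρ+1) = (x + h*γ)^2/(2*(a+ξ'')) := by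
    rw [hu2, hρdef, div_eq_div_iff (by positivity) (by positivity)]
    field_simp
  have hlogρ : Real.log ρ = Real.log a - Real.log ξ'' :=
    Real.log_div ha.ne' hξ''.ne'
  set t := a * (1 - γ^2) / ξ' with htdef
  have ht0 : 0 < t := by positivity
  have hlogt : Real.log t = Real.log a + Real.log (1-γ^2) - Real.log ξ' := by
    rw [htdef, Real.log_div (by positivity) hξ'.ne', Real.log_mul ha.ne' hβ.ne']
  have htle : Real.log t ≤ t - 1 := Real.log_le_sub_one_of_pos ht0
  have hiden : (t-1)/2 + h^2*γ^2/(2*ξ') - x^2/(2*s) + (x + h*γ)^2/(2*(a+ξ''))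
      = h^2/(2*ξ') - (h*x - s*γ)^2/(2*s*(a+ξ'')) := by
    rw [htdef, hadef, hsdef]
    field_simp
    ring
  have hlogb : Real.log (ξ''/ξ') = Real.log ξ'' - Real.log ξ' :=
    Real.log_div hξ''.ne' hξ'.ne'
  have hsqnn : 0 ≤ (h*x - s*γ)^2/(2*s*(a+ξ'')) := by positivity
  clear_value a s ρ u t
  constructor
  · rw [hF, hlogb]
    linarith [hpsi_le, hρ1, hlogρ, hlogt, htle, hiden]
  · intro hcond
    by_cases hC1 : (x + h*γ)^2 = (a+ξ'')^2/a
    · -- then h*x ≠ s*γ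
      have hC3 : h*x ≠ s*γ := by
        intro heq
        exact hcond ⟨hC1, heq⟩
      have hpos : 0 < (h*x - s*γ)^2 :=
        lt_of_le_of_ne (sq_nonneg _) (Ne.symm (pow_ne_zero 2 (sub_ne_zero.mpr hC3)))
      rw [hF, hlogb]
      have h2 : 0 < (h*x - s*γ)^2/(2*s*(a+ξ'')) := by positivity
      linarith [hpsi_le, hρ1, hlogρ, hlogt, htle, hiden]
    · -- psi strict
      have hne' : u^2 ≠ (ρ+1)^2/(2*ρ) := by
        rw [hu2, hρdef]
        intro hcontra
        apply hC1
        have hkey : ((a/ξ'')+1)^2/(2*(a/ξ'')) = (a+ξ'')^2/(2*a*ξ'') := by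
          field_simp
        rw [hkey] at hcontra
        rw [div_eq_div_iff (by positivity) (by positivity)] at hcontra
        rw [eq_div_iff ha.ne']
        have h2ξ : (2*ξ'') ≠ 0 := by positivity
        apply mul_right_cancel₀ h2ξ
        linear_combination hcontra
      have hstrict := hpsi_lt hne'
      rw [hF, hlogb]
      linarith [hρ1, hlogρ, hlogt, htle, hiden]

set_option maxHeartbeats 2000000

/-- If h² > ξ″ − ξ′, then F attains its maximum over ℝ×(−1,1) exactly at ±(x*,γ*),
and the maximum value equals h²/(2ξ′) − (1/2)·ln(ξ″/ξ′). -/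
theorem stmt_11 (ξ' ξ'' h : ℝ) (hξ' : 0 < ξ') (hξ'' : 0 < ξ'') (hh : 0 ≤ h)
    (hgt : ξ'' - ξ' < h ^ 2) :
    (-1 < γstar ξ' h ∧ γstar ξ' h < 1) ∧
    F ξ' ξ'' h (xstar ξ' ξ'' h) (γstar ξ' h) =
      h ^ 2 / (2 * ξ') - (1 / 2) * Real.log (ξ'' / ξ') ∧
    ∀ x γ : ℝ, -1 < γ → γ < 1 →
      ¬(x = xstar ξ' ξ'' h ∧ γ = γstar ξ' h) →
      ¬(x = -xstar ξ' ξ'' h ∧ γ = -γstar ξ' h) →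
      F ξ' ξ'' h x γ < F ξ' ξ'' h (xstar ξ' ξ'' h) (γstar ξ' h) := by
  have ha : 0 < ξ' + h^2 := by positivity
  have hba : ξ'' < ξ' + h^2 := by linarith
  set A := Real.sqrt (ξ' + h^2) with hAdef
  have hA0 : 0 < A := Real.sqrt_pos.mpr ha
  have hA2 : A^2 = ξ' + h^2 := Real.sq_sqrt ha.le
  have hγs : γstar ξ' h = h / A := by rw [γstar]
  have hxs : xstar ξ' ξ'' h = (ξ' + ξ'') / A := by rw [xstar]
  -- Part 1 : -1 < γ* < 1
  have hγlt : γstar ξ' h < 1 := by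
    rw [hγs, div_lt_one hA0]
    nlinarith [hA2, hA0]
  have hγge : 0 ≤ γstar ξ' h := by
    rw [hγs]; positivity
  have part1 : -1 < γstar ξ' h ∧ γstar ξ' h < 1 := ⟨by linarith, hγlt⟩
  have hγsq : (γstar ξ' h)^2 < 1 := by nlinarith
  -- key quantities
  set B := Real.sqrt (2*ξ'') with hBdef
  have hB0 : 0 < B := Real.sqrt_pos.mpr (by positivity)
  have hB2 : B^2 = 2*ξ'' := Real.sq_sqrt (by positivity)
  have hxγ : xstar ξ' ξ'' h + h * γstar ξ' h = (ξ' + h^2 + ξ'') / A := by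
    rw [hxs, hγs]
    field_simp
    ring
  -- Part 2 : value at the maximizer
  have part2 : F ξ' ξ'' h (xstar ξ' ξ'' h) (γstar ξ' h) =
      h ^ 2 / (2 * ξ') - (1 / 2) * Real.log (ξ'' / ξ') := by
    set u := (xstar ξ' ξ'' h + h * γstar ξ' h) / Real.sqrt (2*ξ'') with hudef
    have hu : u = (ξ' + h^2 + ξ'') / (A * B) := by
      rw [hudef, hxγ, ← hBdef, div_div]
    have hu2 : u^2 = (ξ' + h^2 + ξ'')^2 / ((ξ' + h^2) * (2*ξ'')) := by
      rw [hu, div_pow, mul_pow, hA2, hB2]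
    have hupos : 0 < u := by rw [hu]; positivity
    have habs : |u| = u := abs_of_pos hupos
    have hu2m2 : u^2 - 2 = ((ξ' + h^2 - ξ'')/(A*B))^2 := by
      rw [hu2, div_pow, mul_pow, hA2, hB2]
      field_simp
      ring
    have hw : Real.sqrt (u^2 - 2) = (ξ' + h^2 - ξ'')/(A*B) := by
      rw [hu2m2, Real.sqrt_sq (div_nonneg (by linarith) (by positivity))]
    have hge : Real.sqrt 2 ≤ |u| := by
      rw [habs]
      have h2u : 2 ≤ u^2 := by
        rw [hu2, le_div_iff₀ (by positivity)]
        nlinarith [sq_nonneg (ξ' + h^2 - ξ'')]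
      calc Real.sqrt 2 ≤ Real.sqrt (u^2) := Real.sqrt_le_sqrt h2u
        _ = u := by rw [Real.sqrt_sq hupos.le]
    -- the log argument simplifies to A / √ξ''
    have hC0 : 0 < Real.sqrt ξ'' := Real.sqrt_pos.mpr hξ''
    have h4 : Real.sqrt 2 * B = 2 * Real.sqrt ξ'' := by
      rw [hBdef, ← Real.sqrt_mul (by norm_num : (0:ℝ) ≤ 2),
        show (2:ℝ)*(2*ξ'') = 2^2*ξ'' by ring,
        Real.sqrt_mul (by positivity), Real.sqrt_sq (by norm_num)]
    have hval : (|u| + Real.sqrt (u^2 - 2))/Real.sqrt 2 = A / Real.sqrt ξ'' := by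
      rw [habs, hw, hu, ← add_div, div_div,
        div_eq_div_iff (by positivity) hC0.ne']
      have : ξ' + h^2 + ξ'' + (ξ' + h^2 - ξ'') = 2*(ξ'+h^2) := by ring
      rw [this]
      calc 2*(ξ'+h^2) * Real.sqrt ξ'' = 2 * Real.sqrt ξ'' * (ξ'+h^2) := by ring
        _ = Real.sqrt 2 * B * (ξ'+h^2) := by rw [h4]
        _ = A * (A * B * Real.sqrt 2) := by rw [← hA2]; ring
    have hlogval : Real.log (A / Real.sqrt ξ'') =
        Real.log (ξ'+h^2) / 2 - Real.log ξ'' / 2 := by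
      rw [Real.log_div hA0.ne' hC0.ne', hAdef, Real.log_sqrt ha.le,
        Real.log_sqrt hξ''.le]
    have huw : |u| * Real.sqrt (u^2 - 2) =
        ((ξ'+h^2)^2 - ξ''^2) / ((ξ'+h^2) * (2*ξ'')) := by
      rw [habs, hw, hu, div_mul_div_comm]
      have hABAB : A*B*(A*B) = (ξ'+h^2)*(2*ξ'') := by
        linear_combination (B^2)*hA2 + (ξ'+h^2)*hB2
      rw [hABAB]
      congr 1
      ring
    have hPhi : Phi u = -(((ξ'+h^2)^2 - ξ''^2) / ((ξ'+h^2) * (2*ξ''))) / 2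
        + (Real.log (ξ'+h^2) / 2 - Real.log ξ'' / 2) := by
      rw [Phi, if_pos hge, huw, hval, hlogval]
    -- remaining pieces
    have hγ2 : (γstar ξ' h)^2 = h^2/(ξ'+h^2) := by
      rw [hγs, div_pow, hA2]
    have h1γ : 1 - (γstar ξ' h)^2 = ξ'/(ξ'+h^2) := by
      rw [hγ2]
      field_simp
      ring
    have hx2 : (xstar ξ' ξ'' h)^2 = (ξ'+ξ'')^2/(ξ'+h^2) := by
      rw [hxs, div_pow, hA2]
    have hxγ2 : (xstar ξ' ξ'' h + h * γstar ξ' h)^2 = (ξ'+h^2+ξ'')^2/(ξ'+h^2) := by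
      rw [hxγ, div_pow, hA2]
    have hlog1γ : Real.log (1 - (γstar ξ' h)^2) = Real.log ξ' - Real.log (ξ'+h^2) := by
      rw [h1γ, Real.log_div hξ'.ne' ha.ne']
    have hlogb : Real.log (ξ''/ξ') = Real.log ξ'' - Real.log ξ' :=
      Real.log_div hξ''.ne' hξ'.ne'
    clear_value u A B
    rw [F, ← hudef, hPhi, hlog1γ, hγ2, hx2, hxγ2, hlogb]
    field_simp
    ring
  refine ⟨part1, part2, ?_⟩
  clear_value A B
  -- Part 3
  intro x γ hγ1 hγ2 hne1 hne2
  rw [part2]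
  have hγsq' : γ^2 < 1 := by nlinarith
  refine (Fbound ξ' ξ'' h x γ hξ' hξ'' hgt hγsq').2 ?_
  rintro ⟨hC1, hC3⟩
  -- from hC1 : (x+hγ)² = ((ξ'+h²+ξ'')/A)², factor
  have hc2 : ((ξ'+h^2+ξ'')/A)^2 = (ξ'+h^2+ξ'')^2/(ξ'+h^2) := by
    rw [div_pow, hA2]
  have hfact : (x + h*γ - (ξ'+h^2+ξ'')/A) * (x + h*γ + (ξ'+h^2+ξ'')/A) = 0 := by
    linear_combination hC1 - hc2
  have hP : (0:ℝ) < ξ' + h^2 + ξ'' := by positivity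
  rcases mul_eq_zero.mp hfact with hcase | hcase
  · -- x + hγ = P/A : positive branch
    have hcase' : x + h*γ = (ξ'+h^2+ξ'')/A := by linear_combination hcase
    have e1 : γ * (ξ'+h^2+ξ'') = (h/A) * (ξ'+h^2+ξ'') := by
      have : (h/A) * (ξ'+h^2+ξ'') = h * ((ξ'+h^2+ξ'')/A) := by ring
      rw [this]
      linear_combination h * hcase' - hC3
    have hγeq : γ = h/A := mul_right_cancel₀ hP.ne' e1
    have hxeq : x = (ξ'+ξ'')/A := by
      have e2 : x * A = ξ' + ξ'' := by
        have e3 : (x + h*γ) * A = (ξ'+h^2+ξ'') := by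
          rw [hcase', div_mul_cancel₀ _ hA0.ne']
        rw [hγeq] at e3
        have e4 : h * (h/A) * A = h^2 := by
          rw [mul_assoc, div_mul_cancel₀ _ hA0.ne']
          ring
        linear_combination e3 - e4
      rw [eq_div_iff hA0.ne', e2]
    exact hne1 ⟨by rw [hxeq, hxs], by rw [hγeq, hγs]⟩
  · -- negative branch
    have hcase' : x + h*γ = -((ξ'+h^2+ξ'')/A) := by linear_combination hcase
    have e1 : γ * (ξ'+h^2+ξ'') = (-(h/A)) * (ξ'+h^2+ξ'') := by
      have : (-(h/A)) * (ξ'+h^2+ξ'') = h * (-((ξ'+h^2+ξ'')/A)) := by ring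
      rw [this]
      linear_combination h * hcase' - hC3
    have hγeq : γ = -(h/A) := mul_right_cancel₀ hP.ne' e1
    have hxeq : x = -((ξ'+ξ'')/A) := by
      have e2 : x * A = -(ξ' + ξ'') := by
        have e3 : (x + h*γ) * A = -(ξ'+h^2+ξ'') := by
          rw [hcase']
          field_simp
        rw [hγeq] at e3
        have e4 : h * (-(h/A)) * A = -h^2 := by
          rw [show h * (-(h/A)) * A = -(h*(h/A*A)) by ring, div_mul_cancel₀ _ hA0.ne']
          ring
        linear_combination e3 - e4
      rw [show -((ξ'+ξ'')/A) = (-(ξ'+ξ''))/A by ring, eq_div_iff hA0.ne', e2]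
    exact hne2 ⟨by rw [hxeq, hxs], by rw [hγeq, hγs]⟩
end

section
/- If ξ′ < ξ″ and ξ′(ξ″−ξ′)/ξ″ < h² ≤ ξ″ − ξ′, then F(x₀,γ₀) = (1/2)·(H − 1 − ln H). -/
/-- γ₀ = (1/h)·√((ξ″h² − ξ′(ξ″−ξ′))/ξ″). -/
noncomputable def γ0 (ξ' ξ'' h : ℝ) : ℝ :=
  (1 / h) * Real.sqrt ((ξ'' * h ^ 2 - ξ' * (ξ'' - ξ')) / ξ'')

/-- x₀ = h·γ₀·(ξ′+ξ″)/(ξ″−ξ′). -/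
noncomputable def x0 (ξ' ξ'' h : ℝ) : ℝ :=
  h * γ0 ξ' ξ'' h * (ξ' + ξ'') / (ξ'' - ξ')

/-- H = ξ″h²/(ξ′·(ξ″−ξ′)). -/
noncomputable def Hq (ξ' ξ'' h : ℝ) : ℝ := ξ'' * h ^ 2 / (ξ' * (ξ'' - ξ'))

lemma Phi_eq_zero {x : ℝ} (hx : x ^ 2 ≤ 2) : Phi x = 0 := by
  unfold Phi
  split
  · rename_i hge
    have habs : |x| = Real.sqrt 2 := by
      refine le_antisymm ?_ hge
      have := Real.sqrt_le_sqrt hx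
      rwa [Real.sqrt_sq_eq_abs] at this
    have hx2 : x ^ 2 = 2 := by
      have h2 : |x| ^ 2 = 2 := by
        rw [habs, Real.sq_sqrt]; norm_num
      rwa [sq_abs] at h2
    have hs2 : (0:ℝ) < Real.sqrt 2 := Real.sqrt_pos.mpr (by norm_num)
    rw [hx2, habs]
    simp [div_self hs2.ne']
  · rfl

/-- If ξ′ < ξ″ and ξ′(ξ″−ξ′)/ξ″ < h² ≤ ξ″ − ξ′, then F(x₀,γ₀) = (1/2)·(H − 1 − ln H). -/
theorem stmt_12 (ξ' ξ'' h : ℝ) (hξ' : 0 < ξ') (hξ'' : 0 < ξ'') (hh : 0 ≤ h)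
    (hlt : ξ' < ξ'') (h1 : ξ' * (ξ'' - ξ') / ξ'' < h ^ 2) (h2 : h ^ 2 ≤ ξ'' - ξ') :
    F ξ' ξ'' h (x0 ξ' ξ'' h) (γ0 ξ' ξ'' h) =
      (1 / 2) * (Hq ξ' ξ'' h - 1 - Real.log (Hq ξ' ξ'' h)) := by
  have hd : 0 < ξ'' - ξ' := by linarith
  have hh2pos : 0 < h ^ 2 := lt_trans (div_pos (mul_pos hξ' hd) hξ'') h1
  have hhne : h ≠ 0 := by intro he; rw [he] at hh2pos; norm_num at hh2pos
  have hnum : 0 < ξ'' * h ^ 2 - ξ' * (ξ'' - ξ') := by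
    have := (div_lt_iff₀ hξ'').mp h1
    nlinarith
  set s := Real.sqrt ((ξ'' * h ^ 2 - ξ' * (ξ'' - ξ')) / ξ'') with hsdef
  have hs0 : 0 ≤ s := Real.sqrt_nonneg _
  have hs2 : s ^ 2 = (ξ'' * h ^ 2 - ξ' * (ξ'' - ξ')) / ξ'' :=
    Real.sq_sqrt (le_of_lt (div_pos hnum hξ''))
  have hhγ : h * γ0 ξ' ξ'' h = s := by
    unfold γ0; rw [← hsdef]; field_simp
  have hx0 : x0 ξ' ξ'' h = s * (ξ' + ξ'') / (ξ'' - ξ') := by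
    unfold x0; rw [hhγ]
  have hsum : x0 ξ' ξ'' h + h * γ0 ξ' ξ'' h = 2 * s * ξ'' / (ξ'' - ξ') := by
    rw [hx0, hhγ]; field_simp; ring
  have hγ2 : (γ0 ξ' ξ'' h) ^ 2 = s ^ 2 / h ^ 2 := by
    unfold γ0; rw [← hsdef]; field_simp
  -- Phi term vanishes
  have hPhi : Phi ((x0 ξ' ξ'' h + h * γ0 ξ' ξ'' h) / Real.sqrt (2 * ξ'')) = 0 := by
    apply Phi_eq_zero
    have hsq : (Real.sqrt (2 * ξ'')) ^ 2 = 2 * ξ'' :=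
      Real.sq_sqrt (by positivity)
    rw [div_pow, hsq, hsum, div_pow]
    rw [div_le_iff₀ (by positivity)]
    have hss : s ^ 2 * ξ'' ≤ (ξ'' - ξ') ^ 2 := by
      have := hs2
      have h' : s ^ 2 * ξ'' = ξ'' * h ^ 2 - ξ' * (ξ'' - ξ') := by
        rw [hs2]; field_simp
      nlinarith
    rw [div_le_iff₀ (by positivity)]
    nlinarith
  -- log term
  have hHpos : 0 < Hq ξ' ξ'' h := by
    unfold Hq; positivity
  have hγ1 : 1 - (γ0 ξ' ξ'' h) ^ 2 = (Hq ξ' ξ'' h)⁻¹ := by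
    rw [hγ2, hs2]; unfold Hq
    field_simp
    ring
  have hlog : Real.log (1 - (γ0 ξ' ξ'' h) ^ 2) = - Real.log (Hq ξ' ξ'' h) := by
    rw [hγ1, Real.log_inv]
  -- algebraic part
  have hA : h ^ 2 * (γ0 ξ' ξ'' h) ^ 2 / (2 * ξ') - (x0 ξ' ξ'' h) ^ 2 / (2 * (ξ' + ξ'')) +
      (x0 ξ' ξ'' h + h * γ0 ξ' ξ'' h) ^ 2 / (4 * ξ'') = (1 / 2) * (Hq ξ' ξ'' h - 1) := by
    have hpsum : (0:ℝ) < ξ' + ξ'' := by linarith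
    have hA1 : h ^ 2 * (γ0 ξ' ξ'' h) ^ 2 / (2 * ξ') - (x0 ξ' ξ'' h) ^ 2 / (2 * (ξ' + ξ'')) +
        (x0 ξ' ξ'' h + h * γ0 ξ' ξ'' h) ^ 2 / (4 * ξ'') = s ^ 2 * ξ'' / (2 * ξ' * (ξ'' - ξ')) := by
      rw [hsum, hx0, hγ2]
      field_simp
      ring
    rw [hA1, hs2]
    unfold Hq
    rw [div_mul_cancel₀ _ hξ''.ne']
    rw [div_sub' (by positivity : ξ' * (ξ'' - ξ') ≠ 0), ← mul_div_assoc,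
      div_eq_div_iff (by positivity) (by positivity)]
    ring
  unfold F
  rw [hPhi, hlog]
  linarith [hA]
end

section
/- If ξ′ < ξ″ and ξ′(ξ″−ξ′)/ξ″ < h² ≤ ξ″ − ξ′, then F attains its maximum over ℝ×(−1,1) exactly at the two points (x₀,γ₀) and (−x₀,−γ₀), and the maximum value equals (1/2)·(H − 1 − ln H). -/
lemma aux_log_le (t : ℝ) (ht : 1 ≤ t) : Real.log t ≤ (t ^ 2 - (t⁻¹) ^ 2) / 4 := by
  have ht0 : 0 < t := lt_of_lt_of_le one_pos ht
  set r := Real.log t with hr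
  have hr0 : 0 ≤ r := Real.log_nonneg ht
  have hte : t = Real.exp r := (Real.exp_log ht0).symm
  have hsinh : 2 * r ≤ Real.sinh (2 * r) := Real.self_le_sinh_iff.mpr (by linarith)
  rw [Real.sinh_eq] at hsinh
  have h1 : t ^ 2 = Real.exp (2 * r) := by
    rw [hte, ← Real.exp_nat_mul]; norm_num
  have h2 : (t⁻¹) ^ 2 = Real.exp (-(2 * r)) := by
    rw [hte, ← Real.exp_neg, ← Real.exp_nat_mul]; ring_nf
  rw [h1, h2]; linarith

lemma Phi_nonpos (u : ℝ) : Phi u ≤ 0 := by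
  unfold Phi
  split_ifs with hc
  · set a := |u| with ha
    have ha0 : 0 ≤ a := abs_nonneg u
    have hau : a ^ 2 = u ^ 2 := sq_abs u
    have h2a : 2 ≤ u ^ 2 := by
      have := Real.sq_sqrt (by norm_num : (0:ℝ) ≤ 2)
      nlinarith [Real.sqrt_nonneg 2]
    set s := Real.sqrt (u ^ 2 - 2) with hs
    have hs0 : 0 ≤ s := Real.sqrt_nonneg _
    have hs2 : s ^ 2 = u ^ 2 - 2 := Real.sq_sqrt (by linarith)
    have hs2' : 0 < Real.sqrt 2 := Real.sqrt_pos.mpr (by norm_num)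
    have has : Real.sqrt 2 ≤ a + s := by linarith
    have ht1 : 1 ≤ (a + s) / Real.sqrt 2 := (one_le_div hs2').mpr has
    have hlog := aux_log_le _ ht1
    have haspos : 0 < a + s := lt_of_lt_of_le hs2' has
    have hsq2 : (Real.sqrt 2) ^ 2 = 2 := Real.sq_sqrt (by norm_num)
    have hkey : (((a + s) / Real.sqrt 2) ^ 2 - (((a + s) / Real.sqrt 2)⁻¹) ^ 2) / 4 = a * s / 2 := by
      rw [div_pow, inv_pow, div_pow, hsq2]
      rw [inv_div]
      have hne : (a + s) ^ 2 ≠ 0 := pow_ne_zero 2 haspos.ne'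
      field_simp
      nlinarith [hs2, hau, sq_nonneg (a+s)]
    rw [hkey] at hlog
    linarith
  · exact le_refl 0


lemma Phi_zero {u : ℝ} (hu : |u| ≤ Real.sqrt 2) : Phi u = 0 := by
  unfold Phi
  split_ifs with hc
  · have he : |u| = Real.sqrt 2 := le_antisymm hu hc
    have h2 : u ^ 2 - 2 = 0 := by
      have := sq_abs u
      rw [he, Real.sq_sqrt (by norm_num : (0:ℝ) ≤ 2)] at this
      linarith
    rw [h2, Real.sqrt_zero, he]
    have : Real.sqrt 2 ≠ 0 := by positivity
    simp [this]
  · rfl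

set_option maxHeartbeats 1000000 in
/-- If ξ′ < ξ″ and ξ′(ξ″−ξ′)/ξ″ < h² ≤ ξ″ − ξ′, then F attains its maximum over
ℝ×(−1,1) exactly at ±(x₀,γ₀), with maximum value (1/2)·(H − 1 − ln H). -/
theorem stmt_13 (ξ' ξ'' h : ℝ) (hξ' : 0 < ξ') (hξ'' : 0 < ξ'') (hh : 0 ≤ h)
    (hlt : ξ' < ξ'') (h1 : ξ' * (ξ'' - ξ') / ξ'' < h ^ 2) (h2 : h ^ 2 ≤ ξ'' - ξ') :
    (-1 < γ0 ξ' ξ'' h ∧ γ0 ξ' ξ'' h < 1) ∧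
    F ξ' ξ'' h (x0 ξ' ξ'' h) (γ0 ξ' ξ'' h) =
      (1 / 2) * (Hq ξ' ξ'' h - 1 - Real.log (Hq ξ' ξ'' h)) ∧
    ∀ x γ : ℝ, -1 < γ → γ < 1 →
      ¬(x = x0 ξ' ξ'' h ∧ γ = γ0 ξ' ξ'' h) →
      ¬(x = -x0 ξ' ξ'' h ∧ γ = -γ0 ξ' ξ'' h) →
      F ξ' ξ'' h x γ < F ξ' ξ'' h (x0 ξ' ξ'' h) (γ0 ξ' ξ'' h) := by
  have hd : 0 < ξ'' - ξ' := by linarith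
  have hσ : 0 < ξ' + ξ'' := by linarith
  have hA : 0 < ξ'' * h ^ 2 - ξ' * (ξ'' - ξ') := by
    rw [div_lt_iff₀ hξ''] at h1; nlinarith
  have hh0 : 0 < h := by
    rcases lt_or_eq_of_le hh with h' | h'
    · exact h'
    · exfalso; rw [← h'] at hA h2; nlinarith
  obtain ⟨H, hHdef⟩ : ∃ H, Hq ξ' ξ'' h = H := ⟨_, rfl⟩
  obtain ⟨G, hGdef⟩ : ∃ G, γ0 ξ' ξ'' h = G := ⟨_, rfl⟩
  obtain ⟨X, hXdef⟩ : ∃ X, x0 ξ' ξ'' h = X := ⟨_, rfl⟩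
  obtain ⟨k, hk⟩ : ∃ k, h * (ξ' + ξ'') / (ξ'' - ξ') = k := ⟨_, rfl⟩
  obtain ⟨c, hc⟩ : ∃ c, (ξ'' - ξ') / (4 * ξ'' * (ξ' + ξ'')) = c := ⟨_, rfl⟩
  rw [hHdef, hGdef, hXdef]
  have hHq : H = ξ'' * h ^ 2 / (ξ' * (ξ'' - ξ')) := by rw [← hHdef, Hq]
  have hHpos : 0 < H := by rw [hHq]; positivity
  have hH1 : 1 < H := by
    rw [hHq, lt_div_iff₀ (by positivity)]; nlinarith
  have hγsq : G ^ 2 = 1 - 1 / H := by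
    rw [← hGdef, γ0, mul_pow,
      Real.sq_sqrt (by positivity : (0:ℝ) ≤ (ξ'' * h ^ 2 - ξ' * (ξ'' - ξ')) / ξ''),
      hHq]
    field_simp
  have hγpos : 0 < G := by
    rw [← hGdef, γ0]
    have : 0 < Real.sqrt ((ξ'' * h ^ 2 - ξ' * (ξ'' - ξ')) / ξ'') :=
      Real.sqrt_pos.mpr (by positivity)
    positivity
  have hHinv : 0 < 1 / H := by positivity
  have hγlt : G < 1 := by nlinarith
  have hcpos : 0 < c := by rw [← hc]; positivity
  have hx0 : X = k * G := by rw [← hXdef, ← hk, ← hGdef, x0]; ring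
  -- quadratic decomposition
  have hQ : ∀ x γ : ℝ, h ^ 2 * γ ^ 2 / (2 * ξ') - x ^ 2 / (2 * (ξ' + ξ'')) +
      (x + h * γ) ^ 2 / (4 * ξ'') = (H / 2) * γ ^ 2 - c * (x - k * γ) ^ 2 := by
    intro x γ
    rw [hHq, ← hc, ← hk]
    field_simp
    ring
  -- upper bound on F
  have hFle : ∀ x γ : ℝ, F ξ' ξ'' h x γ ≤
      (1 / 2) * Real.log (1 - γ ^ 2) + (H / 2) * γ ^ 2 - c * (x - k * γ) ^ 2 := by
    intro x γ
    have hp := Phi_nonpos ((x + h * γ) / Real.sqrt (2 * ξ''))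
    have hq := hQ x γ
    rw [F]
    linarith
  -- g bound, strict version
  have hglt : ∀ γ : ℝ, -1 < γ → γ < 1 → γ ^ 2 ≠ G ^ 2 →
      (1 / 2) * Real.log (1 - γ ^ 2) + (H / 2) * γ ^ 2 <
        (1 / 2) * (H - 1 - Real.log H) := by
    intro γ hγ1 hγ2 hne
    have h1γ : 0 < 1 - γ ^ 2 := by nlinarith
    have hlog : Real.log (H * (1 - γ ^ 2)) = Real.log H + Real.log (1 - γ ^ 2) :=
      Real.log_mul hHpos.ne' h1γ.ne'
    have hne1 : H * (1 - γ ^ 2) ≠ 1 := by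
      intro heq
      apply hne
      rw [hγsq]
      have hH0 : H ≠ 0 := hHpos.ne'
      field_simp
      nlinarith [heq]
    have hle : Real.log (H * (1 - γ ^ 2)) < H * (1 - γ ^ 2) - 1 :=
      Real.log_lt_sub_one_of_pos (by positivity) hne1
    nlinarith
  -- value at the maximum
  have h1G : 1 - G ^ 2 = 1 / H := by rw [hγsq]; ring
  have hlogG : Real.log (1 - G ^ 2) = -Real.log H := by
    rw [h1G, one_div, Real.log_inv]
  have hPhi0 : Phi ((X + h * G) / Real.sqrt (2 * ξ'')) = 0 := by
    apply Phi_zero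
    have hs2 : (0:ℝ) ≤ 2 * ξ'' := by positivity
    have hxg : X + h * G = h * G * (2 * ξ'') / (ξ'' - ξ') := by
      rw [hx0, ← hk]; field_simp; ring
    have hGH : h ^ 2 * G ^ 2 = (ξ'' * h ^ 2 - ξ' * (ξ'' - ξ')) / ξ'' := by
      rw [hγsq, hHq]; field_simp
    have hsq : ((X + h * G) / Real.sqrt (2 * ξ'')) ^ 2 ≤ 2 := by
      rw [div_pow, Real.sq_sqrt hs2, div_le_iff₀ (by positivity), hxg]
      rw [div_pow, div_le_iff₀ (by positivity)]
      have expand : (h * G * (2 * ξ'')) ^ 2 = h ^ 2 * G ^ 2 * (4 * ξ'' ^ 2) := by ring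
      rw [expand, hGH]
      rw [div_mul_eq_mul_div, div_le_iff₀ hξ'']
      nlinarith [mul_le_mul_of_nonneg_left (mul_le_mul_of_nonneg_left h2 hξ''.le)
        (by positivity : (0:ℝ) ≤ 4 * ξ'' ^ 2)]
    calc |(X + h * G) / Real.sqrt (2 * ξ'')|
        = Real.sqrt (((X + h * G) / Real.sqrt (2 * ξ'')) ^ 2) := by
          rw [Real.sqrt_sq_eq_abs]
      _ ≤ Real.sqrt 2 := Real.sqrt_le_sqrt hsq
  have hHG : H / 2 * G ^ 2 = H / 2 - 1 / 2 := by
    rw [hγsq]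
    have hH0 : H ≠ 0 := hHpos.ne'
    field_simp
  have hval : F ξ' ξ'' h X G = (1 / 2) * (H - 1 - Real.log H) := by
    rw [F, hPhi0, add_zero]
    have hq := hQ X G
    have hz : X - k * G = 0 := by rw [hx0]; ring
    rw [hz] at hq
    simp only [ne_eq, OfNat.ofNat_ne_zero, not_false_eq_true, zero_pow, mul_zero, sub_zero] at hq
    linarith [hq, hHG, hlogG]
  refine ⟨⟨by linarith, hγlt⟩, hval, ?_⟩
  intro x γ hγ1 hγ2 hne1 hne2
  rw [hval]
  have hF := hFle x γ
  by_cases hcase : γ ^ 2 = G ^ 2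
  · have habs : |γ| = |G| := by
      rw [← Real.sqrt_sq_eq_abs, ← Real.sqrt_sq_eq_abs, hcase]
    have hor : γ = G ∨ γ = -G := abs_eq_abs.mp habs
    have hxne : x ≠ k * γ := by
      rcases hor with h' | h'
      · intro hx; exact hne1 ⟨by rw [hx, h', ← hx0], h'⟩
      · intro hx; apply hne2
        constructor
        · rw [hx, h', hx0]; ring
        · exact h'
    have hpos : 0 < c * (x - k * γ) ^ 2 := by
      have : x - k * γ ≠ 0 := sub_ne_zero.mpr hxne
      positivity
    have hg : (1 / 2) * Real.log (1 - γ ^ 2) + (H / 2) * γ ^ 2 =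
        (1 / 2) * (H - 1 - Real.log H) := by
      rw [hcase, hlogG]
      linarith [hHG]
    linarith
  · have hg := hglt γ hγ1 hγ2 hcase
    have hq0 : 0 ≤ c * (x - k * γ) ^ 2 := mul_nonneg hcpos.le (sq_nonneg _)
    linarith
end

section
/- If h² > ξ″ − ξ′, then F is twice continuously differentiable in a neighborhood of (x*,γ*) with ∂²ₓF(x*,γ*) = −(2ξ′+h²)/((h²+ξ′−ξ″)(ξ′+ξ″)), ∂²_γF(x*,γ*) = −(ξ′+2h²)(ξ′+h²)/(ξ′)² + h²(h²−ξ″)/(ξ′(h²+ξ′−ξ″)), ∂ₓ∂_γF(x*,γ*) = −h/(h²+ξ′−ξ″), and consequently the determinant of the Hessian of F at (x*,γ*) equals 2(ξ′+h²)³/((h²+ξ′−ξ″)·(ξ′)²·(ξ′+ξ″)). -/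
open Topology Filter


noncomputable def psi (b w : ℝ) : ℝ :=
  -(w * Real.sqrt (w ^ 2 - 4 * b)) / (4 * b) +
    Real.log ((w + Real.sqrt (w ^ 2 - 4 * b)) / (2 * Real.sqrt b))

lemma phi_eq_psi {b w : ℝ} (hb : 0 < b) (hw : 0 < w) (h4 : 4 * b < w ^ 2) :
    Phi (w / Real.sqrt (2 * b)) = psi b w := by
  have h2b : (0:ℝ) < 2 * b := by linarith
  have hs : 0 < Real.sqrt (2 * b) := Real.sqrt_pos.2 h2b
  set u := w / Real.sqrt (2 * b) with hu_def
  have hu : 0 < u := div_pos hw hs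
  have hu2 : u ^ 2 = w ^ 2 / (2 * b) := by
    rw [hu_def, div_pow, Real.sq_sqrt h2b.le]
  have h2u : (2:ℝ) ≤ u ^ 2 := by
    rw [hu2, le_div_iff₀ h2b]; linarith
  have hcond : Real.sqrt 2 ≤ |u| := by
    rw [← Real.sqrt_sq_eq_abs]; exact Real.sqrt_le_sqrt h2u
  have hqu : Real.sqrt (u ^ 2 - 2) = Real.sqrt (w ^ 2 - 4 * b) / Real.sqrt (2 * b) := by
    rw [hu2, show w ^ 2 / (2 * b) - 2 = (w ^ 2 - 4 * b) / (2 * b) by field_simp; ring,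
      Real.sqrt_div (by linarith)]
  have hmul : Real.sqrt (2 * b) * Real.sqrt 2 = 2 * Real.sqrt b := by
    rw [← Real.sqrt_mul h2b.le]
    rw [show 2 * b * 2 = 4 * b by ring, show (4:ℝ) * b = 2 ^ 2 * b by norm_num,
      Real.sqrt_mul (by positivity), Real.sqrt_sq (by norm_num)]
  rw [Phi, if_pos hcond, abs_of_pos hu, psi, hqu]
  have hsne : Real.sqrt (2 * b) ≠ 0 := ne_of_gt hs
  congr 1
  · rw [hu_def]
    rw [div_mul_div_comm]
    rw [Real.mul_self_sqrt h2b.le]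
    ring
  · congr 1
    rw [hu_def, ← add_div, div_div, hmul]

lemma hasDerivAt_sqrt_quad {b : ℝ} (w : ℝ) (h4 : 4 * b < w ^ 2) :
    HasDerivAt (fun y : ℝ => Real.sqrt (y ^ 2 - 4 * b))
      (w / Real.sqrt (w ^ 2 - 4 * b)) w := by
  have hpos : 0 < w ^ 2 - 4 * b := by linarith
  have h1 : HasDerivAt (fun y : ℝ => y ^ 2 - 4 * b) (2 * w) w := by
    simpa using (hasDerivAt_pow 2 w).sub_const (4 * b)
  have h2 := (Real.hasDerivAt_sqrt (ne_of_gt hpos)).comp w h1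
  have hD : Real.sqrt (w ^ 2 - 4 * b) ≠ 0 := ne_of_gt (Real.sqrt_pos.2 hpos)
  refine h2.congr_deriv ?_
  field_simp

lemma hasDerivAt_psi {b w : ℝ} (hb : 0 < b) (hw : 0 < w) (h4 : 4 * b < w ^ 2) :
    HasDerivAt (psi b) (-Real.sqrt (w ^ 2 - 4 * b) / (2 * b)) w := by
  have hpos : 0 < w ^ 2 - 4 * b := by linarith
  have hD : 0 < Real.sqrt (w ^ 2 - 4 * b) := Real.sqrt_pos.2 hpos
  have hD2 : Real.sqrt (w ^ 2 - 4 * b) ^ 2 = w ^ 2 - 4 * b := Real.sq_sqrt hpos.le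
  have hs := hasDerivAt_sqrt_quad w h4
  have hA : HasDerivAt (fun y : ℝ => -(y * Real.sqrt (y ^ 2 - 4 * b)) / (4 * b))
      (-(1 * Real.sqrt (w ^ 2 - 4 * b) + w * (w / Real.sqrt (w ^ 2 - 4 * b))) / (4 * b)) w :=
    (((hasDerivAt_id w).mul hs).neg).div_const (4 * b)
  have hsb : 0 < Real.sqrt b := Real.sqrt_pos.2 hb
  have hB : HasDerivAt (fun y : ℝ => (y + Real.sqrt (y ^ 2 - 4 * b)) / (2 * Real.sqrt b))
      ((1 + w / Real.sqrt (w ^ 2 - 4 * b)) / (2 * Real.sqrt b)) w :=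
    ((hasDerivAt_id w).add hs).div_const _
  have harg : (w + Real.sqrt (w ^ 2 - 4 * b)) / (2 * Real.sqrt b) ≠ 0 := by positivity
  have hlog := hB.log harg
  have := hA.add hlog
  refine this.congr_deriv ?_
  symm
  have hwD : w + Real.sqrt (w ^ 2 - 4 * b) ≠ 0 := by positivity
  have key : (1 + w / Real.sqrt (w ^ 2 - 4 * b)) / (2 * Real.sqrt b) /
      ((w + Real.sqrt (w ^ 2 - 4 * b)) / (2 * Real.sqrt b)) = 1 / Real.sqrt (w ^ 2 - 4 * b) := by
    rw [div_div_div_cancel_right₀]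
    · field_simp
      ring
    · positivity
  rw [key]
  field_simp
  linear_combination (-2) * hD2

lemma hasDerivAt_psi_deriv {b w : ℝ} (h4 : 4 * b < w ^ 2) :
    HasDerivAt (fun y : ℝ => -Real.sqrt (y ^ 2 - 4 * b) / (2 * b))
      (-(w / Real.sqrt (w ^ 2 - 4 * b)) / (2 * b)) w :=
  ((hasDerivAt_sqrt_quad w h4).neg).div_const _

noncomputable def G (ξ' ξ'' h x γ : ℝ) : ℝ :=
  (1 / 2) * Real.log (1 - γ ^ 2) + h ^ 2 * γ ^ 2 / (2 * ξ') -
    x ^ 2 / (2 * (ξ' + ξ'')) + (x + h * γ) ^ 2 / (4 * ξ'') + psi ξ'' (x + h * γ)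

lemma F_eq_G {ξ'' : ℝ} (ξ' h x γ : ℝ) (hξ'' : 0 < ξ'') (h1 : 0 < x + h * γ)
    (h2 : 4 * ξ'' < (x + h * γ) ^ 2) : F ξ' ξ'' h x γ = G ξ' ξ'' h x γ := by
  unfold F G
  rw [phi_eq_psi hξ'' h1 h2]

lemma hasDerivAt_G_x (ξ' h γ : ℝ) {ξ'' x : ℝ} (hξ'' : 0 < ξ'') (hne : ξ' + ξ'' ≠ 0) (h1 : 0 < x + h * γ)
    (h2 : 4 * ξ'' < (x + h * γ) ^ 2) :
    HasDerivAt (fun x => G ξ' ξ'' h x γ)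
      (-x / (ξ' + ξ'') + (x + h * γ) / (2 * ξ'') -
        Real.sqrt ((x + h * γ) ^ 2 - 4 * ξ'') / (2 * ξ'')) x := by
  have hi : HasDerivAt (fun x : ℝ => x + h * γ) 1 x := (hasDerivAt_id x).add_const _
  have hpsi := (hasDerivAt_psi hξ'' h1 h2).comp x hi
  simp only [Function.comp_def] at hpsi
  have h3 : HasDerivAt (fun x : ℝ => x ^ 2 / (2 * (ξ' + ξ'')))
      ((2 : ℕ) * x ^ 1 / (2 * (ξ' + ξ''))) x := (hasDerivAt_pow 2 x).div_const _
  have h4 : HasDerivAt (fun x : ℝ => (x + h * γ) ^ 2 / (4 * ξ''))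
      ((2 : ℕ) * (x + h * γ) ^ 1 * 1 / (4 * ξ'')) x := (hi.pow 2).div_const _
  have hc : HasDerivAt (fun _ : ℝ =>
      (1 / 2) * Real.log (1 - γ ^ 2) + h ^ 2 * γ ^ 2 / (2 * ξ')) 0 x := hasDerivAt_const _ _
  have hall := ((hc.sub h3).add h4).add hpsi
  have hDne : Real.sqrt ((x + h * γ) ^ 2 - 4 * ξ'') ≠ 0 :=
    ne_of_gt (Real.sqrt_pos.2 (by linarith))
  refine hall.congr_deriv ?_
  symm
  push_cast
  field_simp
  ring

lemma hasDerivAt_G_gamma (ξ'' h x : ℝ) {ξ' γ : ℝ} (hξ' : 0 < ξ') (hξ'' : 0 < ξ'')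
    (hγ : γ ^ 2 < 1) (h1 : 0 < x + h * γ) (h2 : 4 * ξ'' < (x + h * γ) ^ 2) :
    HasDerivAt (fun γ => G ξ' ξ'' h x γ)
      (-γ / (1 - γ ^ 2) + h ^ 2 * γ / ξ' + h * (x + h * γ) / (2 * ξ'') -
        h * Real.sqrt ((x + h * γ) ^ 2 - 4 * ξ'') / (2 * ξ'')) γ := by
  have h1γ : (0:ℝ) < 1 - γ ^ 2 := by linarith
  have hi : HasDerivAt (fun γ : ℝ => x + h * γ) (h * 1) γ :=
    ((hasDerivAt_id γ).const_mul h).const_add x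
  have hpsi := ((hasDerivAt_psi hξ'' h1 h2).comp γ hi)
  simp only [Function.comp_def] at hpsi
  have hlog : HasDerivAt (fun γ : ℝ => (1 / 2 : ℝ) * Real.log (1 - γ ^ 2))
      ((1 / 2) * (-(2 * γ ^ 1) / (1 - γ ^ 2))) γ := by
    have := (((hasDerivAt_pow 2 γ).const_sub 1).log (ne_of_gt h1γ)).const_mul (1 / 2 : ℝ)
    refine this.congr_deriv ?_
    all_goals push_cast; ring
  have hq : HasDerivAt (fun γ : ℝ => h ^ 2 * γ ^ 2 / (2 * ξ'))
      (h ^ 2 * (2 * γ ^ 1) / (2 * ξ')) γ := by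
    have := ((hasDerivAt_pow 2 γ).const_mul (h ^ 2)).div_const (2 * ξ')
    refine this.congr_deriv ?_
    all_goals push_cast; ring
  have hsq : HasDerivAt (fun γ : ℝ => (x + h * γ) ^ 2 / (4 * ξ''))
      ((2 : ℕ) * (x + h * γ) ^ 1 * (h * 1) / (4 * ξ'')) γ := (hi.pow 2).div_const _
  have hall := ((((hlog.add hq).sub_const (x ^ 2 / (2 * (ξ' + ξ'')))).add hsq).add hpsi)
  have hDne : Real.sqrt ((x + h * γ) ^ 2 - 4 * ξ'') ≠ 0 :=
    ne_of_gt (Real.sqrt_pos.2 (by linarith))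
  refine hall.congr_deriv ?_
  symm
  push_cast
  field_simp
  ring

set_option maxHeartbeats 1000000 in
/-- If h² > ξ″ − ξ′, then F is C² near (x*,γ*), with the stated second partial
derivatives, and the Hessian determinant at (x*,γ*) equals
2(ξ′+h²)³/((h²+ξ′−ξ″)·(ξ′)²·(ξ′+ξ″)). -/
theorem stmt_17 (ξ' ξ'' h : ℝ) (hξ' : 0 < ξ') (hξ'' : 0 < ξ'') (hh : 0 ≤ h)
    (hgt : ξ'' - ξ' < h ^ 2) :
    ContDiffAt ℝ 2 (fun p : ℝ × ℝ => F ξ' ξ'' h p.1 p.2) (xstar ξ' ξ'' h, γstar ξ' h) ∧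
    deriv (deriv (fun x => F ξ' ξ'' h x (γstar ξ' h))) (xstar ξ' ξ'' h) =
      -(2 * ξ' + h ^ 2) / ((h ^ 2 + ξ' - ξ'') * (ξ' + ξ'')) ∧
    deriv (deriv (fun γ => F ξ' ξ'' h (xstar ξ' ξ'' h) γ)) (γstar ξ' h) =
      -((ξ' + 2 * h ^ 2) * (ξ' + h ^ 2)) / ξ' ^ 2 +
        h ^ 2 * (h ^ 2 - ξ'') / (ξ' * (h ^ 2 + ξ' - ξ'')) ∧
    deriv (fun γ => deriv (fun x => F ξ' ξ'' h x γ) (xstar ξ' ξ'' h)) (γstar ξ' h) =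
      -h / (h ^ 2 + ξ' - ξ'') ∧
    deriv (deriv (fun x => F ξ' ξ'' h x (γstar ξ' h))) (xstar ξ' ξ'' h) *
        deriv (deriv (fun γ => F ξ' ξ'' h (xstar ξ' ξ'' h) γ)) (γstar ξ' h) -
        (deriv (fun γ => deriv (fun x => F ξ' ξ'' h x γ) (xstar ξ' ξ'' h)) (γstar ξ' h)) ^ 2 =
      2 * (ξ' + h ^ 2) ^ 3 / ((h ^ 2 + ξ' - ξ'') * ξ' ^ 2 * (ξ' + ξ'')) := by
  have ha : (0:ℝ) < ξ' + h ^ 2 := by positivity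
  set r := Real.sqrt (ξ' + h ^ 2) with hr_def
  have hr : 0 < r := Real.sqrt_pos.2 ha
  have hr2 : r ^ 2 = ξ' + h ^ 2 := Real.sq_sqrt ha.le
  set x₀ := xstar ξ' ξ'' h with hx₀def
  set γ₀ := γstar ξ' h with hγ₀def
  have hx₀' : x₀ = (ξ' + ξ'') / r := rfl
  have hγ₀' : γ₀ = h / r := rfl
  have hd : 0 < h ^ 2 + ξ' - ξ'' := by linarith
  have hne : ξ' + ξ'' ≠ 0 := by positivity
  have hs₀ : x₀ + h * γ₀ = (ξ' + h ^ 2 + ξ'') / r := by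
    rw [hx₀', hγ₀']; field_simp; ring
  have hs₀pos : 0 < x₀ + h * γ₀ := by rw [hs₀]; positivity
  have hs₀sq : 4 * ξ'' < (x₀ + h * γ₀) ^ 2 := by
    rw [hs₀, div_pow, hr2, lt_div_iff₀ ha]
    nlinarith [mul_pos hd hd]
  have hγsq : γ₀ ^ 2 = h ^ 2 / (ξ' + h ^ 2) := by rw [hγ₀', div_pow, hr2]
  have h1mγ : 1 - γ₀ ^ 2 = ξ' / (ξ' + h ^ 2) := by rw [hγsq]; field_simp; ring
  have hγlt : γ₀ ^ 2 < 1 := by rw [hγsq, div_lt_one ha]; linarith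
  have hD₀ : Real.sqrt ((x₀ + h * γ₀) ^ 2 - 4 * ξ'') = (h ^ 2 + ξ' - ξ'') / r := by
    have heq : (x₀ + h * γ₀) ^ 2 - 4 * ξ'' = ((h ^ 2 + ξ' - ξ'') / r) ^ 2 := by
      rw [hs₀, div_pow, div_pow, hr2]; field_simp; ring
    rw [heq, Real.sqrt_sq (by positivity)]
  -- the open set where F = G
  have hSo : IsOpen {p : ℝ × ℝ | 0 < p.1 + h * p.2 ∧ 4 * ξ'' < (p.1 + h * p.2) ^ 2} :=
    (isOpen_lt continuous_const (by fun_prop)).and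
      (isOpen_lt continuous_const (by fun_prop))
  have hnhds : {p : ℝ × ℝ | 0 < p.1 + h * p.2 ∧ 4 * ξ'' < (p.1 + h * p.2) ^ 2} ∈
      𝓝 (x₀, γ₀) := hSo.mem_nhds ⟨hs₀pos, hs₀sq⟩
  have hFG : (fun p : ℝ × ℝ => F ξ' ξ'' h p.1 p.2) =ᶠ[𝓝 (x₀, γ₀)]
      (fun p : ℝ × ℝ => G ξ' ξ'' h p.1 p.2) := by
    filter_upwards [hnhds] with p hp
    exact F_eq_G ξ' h p.1 p.2 hξ'' hp.1 hp.2
  -- Part 1 : ContDiffAt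
  have hinner : ContDiff ℝ 2 (fun p : ℝ × ℝ => p.1 + h * p.2) := by fun_prop
  have hs₀ne : (x₀ + h * γ₀) ^ 2 - 4 * ξ'' ≠ 0 := by nlinarith
  have hsqrtCD : ContDiffAt ℝ 2
      (fun p : ℝ × ℝ => Real.sqrt ((p.1 + h * p.2) ^ 2 - 4 * ξ'')) (x₀, γ₀) :=
    (Real.contDiffAt_sqrt hs₀ne).comp (x₀, γ₀) (((hinner.pow 2).sub contDiff_const).contDiffAt)
  have hDpos : 0 < Real.sqrt ((x₀ + h * γ₀) ^ 2 - 4 * ξ'') :=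
    Real.sqrt_pos.2 (by nlinarith)
  have hlogCD : ContDiffAt ℝ 2 (fun p : ℝ × ℝ => Real.log (1 - p.2 ^ 2)) (x₀, γ₀) := by
    have hbase : ContDiff ℝ 2 (fun p : ℝ × ℝ => 1 - p.2 ^ 2) := by fun_prop
    exact (Real.contDiffAt_log.2 (by rw [h1mγ]; positivity)).comp (x₀, γ₀) hbase.contDiffAt
  have hlog2CD : ContDiffAt ℝ 2 (fun p : ℝ × ℝ =>
      Real.log ((p.1 + h * p.2 + Real.sqrt ((p.1 + h * p.2) ^ 2 - 4 * ξ'')) /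
        (2 * Real.sqrt ξ''))) (x₀, γ₀) := by
    refine (Real.contDiffAt_log.2 ?_).comp (x₀, γ₀) ((hinner.contDiffAt.add hsqrtCD).div_const _)
    have : 0 < Real.sqrt ξ'' := Real.sqrt_pos.2 hξ''
    positivity
  have hGCD : ContDiffAt ℝ 2 (fun p : ℝ × ℝ => G ξ' ξ'' h p.1 p.2) (x₀, γ₀) := by
    unfold G psi
    exact ((((contDiffAt_const.mul hlogCD).add
      (((contDiffAt_const.mul ((contDiff_snd.pow 2).contDiffAt)).div_const _))).sub
      (((contDiff_fst.pow 2).contDiffAt).div_const _)).add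
      ((hinner.pow 2).contDiffAt.div_const _)).add
      ((((hinner.contDiffAt.mul hsqrtCD).neg).div_const _).add hlog2CD)
  have part1 : ContDiffAt ℝ 2 (fun p : ℝ × ℝ => F ξ' ξ'' h p.1 p.2) (x₀, γ₀) :=
    hGCD.congr_of_eventuallyEq hFG
  -- Part 2 : second derivative in x
  have htx : Filter.Tendsto (fun x : ℝ => (x, γ₀)) (𝓝 x₀) (𝓝 (x₀, γ₀)) :=
    (Continuous.tendsto (by fun_prop) x₀)
  have e1x : ∀ᶠ x in 𝓝 x₀, 0 < x + h * γ₀ ∧ 4 * ξ'' < (x + h * γ₀) ^ 2 :=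
    htx.eventually hnhds
  have hev_x : (fun x => F ξ' ξ'' h x γ₀) =ᶠ[𝓝 x₀] (fun x => G ξ' ξ'' h x γ₀) := by
    filter_upwards [e1x] with x hx
    exact F_eq_G ξ' h x γ₀ hξ'' hx.1 hx.2
  have hderiv_x : deriv (fun x => F ξ' ξ'' h x γ₀) =ᶠ[𝓝 x₀]
      (fun x => -x / (ξ' + ξ'') + (x + h * γ₀) / (2 * ξ'') -
        Real.sqrt ((x + h * γ₀) ^ 2 - 4 * ξ'') / (2 * ξ'')) := by
    refine hev_x.deriv.trans ?_
    filter_upwards [e1x] with x hx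
    exact (hasDerivAt_G_x ξ' h γ₀ hξ'' hne hx.1 hx.2).deriv
  have hix : HasDerivAt (fun x : ℝ => x + h * γ₀) 1 x₀ := (hasDerivAt_id _).add_const _
  have hg1 : HasDerivAt (fun x => -x / (ξ' + ξ'') + (x + h * γ₀) / (2 * ξ'') -
      Real.sqrt ((x + h * γ₀) ^ 2 - 4 * ξ'') / (2 * ξ''))
      (-1 / (ξ' + ξ'') + 1 / (2 * ξ'') -
        ((x₀ + h * γ₀) / Real.sqrt ((x₀ + h * γ₀) ^ 2 - 4 * ξ'') * 1) / (2 * ξ'')) x₀ := by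
    have hsq := ((hasDerivAt_sqrt_quad (x₀ + h * γ₀) hs₀sq).comp x₀ hix).div_const (2 * ξ'')
    simp only [Function.comp] at hsq
    exact (((hasDerivAt_id x₀).neg.div_const (ξ' + ξ'')).add (hix.div_const _)).sub hsq
  have part2 : deriv (deriv (fun x => F ξ' ξ'' h x γ₀)) x₀ =
      -(2 * ξ' + h ^ 2) / ((h ^ 2 + ξ' - ξ'') * (ξ' + ξ'')) := by
    rw [hderiv_x.deriv_eq, hg1.deriv, hD₀, hs₀]
    field_simp
    ring
  -- Part 3 : second derivative in γ
  have htγ : Filter.Tendsto (fun γ : ℝ => (x₀, γ)) (𝓝 γ₀) (𝓝 (x₀, γ₀)) :=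
    (Continuous.tendsto (by fun_prop) γ₀)
  have e1γ : ∀ᶠ γ in 𝓝 γ₀, 0 < x₀ + h * γ ∧ 4 * ξ'' < (x₀ + h * γ) ^ 2 :=
    htγ.eventually hnhds
  have e2γ : ∀ᶠ γ in 𝓝 γ₀, γ ^ 2 < 1 :=
    (isOpen_lt (continuous_pow 2) continuous_const).mem_nhds hγlt
  have hev_γ : (fun γ => F ξ' ξ'' h x₀ γ) =ᶠ[𝓝 γ₀] (fun γ => G ξ' ξ'' h x₀ γ) := by
    filter_upwards [e1γ] with γ hγ
    exact F_eq_G ξ' h x₀ γ hξ'' hγ.1 hγ.2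
  have hderiv_γ : deriv (fun γ => F ξ' ξ'' h x₀ γ) =ᶠ[𝓝 γ₀]
      (fun γ => -γ / (1 - γ ^ 2) + h ^ 2 * γ / ξ' + h * (x₀ + h * γ) / (2 * ξ'') -
        h * Real.sqrt ((x₀ + h * γ) ^ 2 - 4 * ξ'') / (2 * ξ'')) := by
    refine hev_γ.deriv.trans ?_
    filter_upwards [e1γ, e2γ] with γ hγ hγ2
    exact (hasDerivAt_G_gamma ξ'' h x₀ hξ' hξ'' hγ2 hγ.1 hγ.2).deriv
  have hiγ : HasDerivAt (fun γ : ℝ => x₀ + h * γ) (h * 1) γ₀ :=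
    ((hasDerivAt_id γ₀).const_mul h).const_add x₀
  have h1mγpos : (0:ℝ) < 1 - γ₀ ^ 2 := by linarith
  have ht1 : HasDerivAt (fun γ : ℝ => -γ / (1 - γ ^ 2))
      (-(1 + γ₀ ^ 2) / (1 - γ₀ ^ 2) ^ 2) γ₀ := by
    have := HasDerivAt.div ((hasDerivAt_id γ₀).neg)
      ((hasDerivAt_pow 2 γ₀).const_sub 1) (ne_of_gt h1mγpos)
    refine this.congr_deriv ?_
    symm
    simp only [Pi.neg_apply, id_eq]
    push_cast
    ring
  have hg2 : HasDerivAt (fun γ => -γ / (1 - γ ^ 2) + h ^ 2 * γ / ξ' +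
      h * (x₀ + h * γ) / (2 * ξ'') -
      h * Real.sqrt ((x₀ + h * γ) ^ 2 - 4 * ξ'') / (2 * ξ''))
      (-(1 + γ₀ ^ 2) / (1 - γ₀ ^ 2) ^ 2 + h ^ 2 * 1 / ξ' + h * (h * 1) / (2 * ξ'') -
        h * ((x₀ + h * γ₀) / Real.sqrt ((x₀ + h * γ₀) ^ 2 - 4 * ξ'') * (h * 1)) /
          (2 * ξ'')) γ₀ := by
    have ht2 : HasDerivAt (fun γ : ℝ => h ^ 2 * γ / ξ') (h ^ 2 * 1 / ξ') γ₀ :=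
      ((hasDerivAt_id γ₀).const_mul (h ^ 2)).div_const ξ'
    have ht3 : HasDerivAt (fun γ : ℝ => h * (x₀ + h * γ) / (2 * ξ''))
        (h * (h * 1) / (2 * ξ'')) γ₀ := (hiγ.const_mul h).div_const _
    have ht4 := (((hasDerivAt_sqrt_quad (x₀ + h * γ₀) hs₀sq).comp γ₀
      hiγ).const_mul h).div_const (2 * ξ'')
    simp only [Function.comp] at ht4
    exact ((ht1.add ht2).add ht3).sub ht4
  have part3 : deriv (deriv (fun γ => F ξ' ξ'' h x₀ γ)) γ₀ =
      -((ξ' + 2 * h ^ 2) * (ξ' + h ^ 2)) / ξ' ^ 2 +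
        h ^ 2 * (h ^ 2 - ξ'') / (ξ' * (h ^ 2 + ξ' - ξ'')) := by
    rw [hderiv_γ.deriv_eq, hg2.deriv, hD₀, hs₀, h1mγ, hγsq]
    field_simp
    ring
  -- Part 4 : mixed derivative
  obtain ⟨u, hu, v, hv, huv⟩ := mem_nhds_prod_iff.1 hnhds
  have hmix : (fun γ => deriv (fun x => F ξ' ξ'' h x γ) x₀) =ᶠ[𝓝 γ₀]
      (fun γ => -x₀ / (ξ' + ξ'') + (x₀ + h * γ) / (2 * ξ'') -
        Real.sqrt ((x₀ + h * γ) ^ 2 - 4 * ξ'') / (2 * ξ'')) := by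
    filter_upwards [hv] with γ hγ
    have hcond := huv (Set.mk_mem_prod (mem_of_mem_nhds hu) hγ)
    have hFx : (fun x => F ξ' ξ'' h x γ) =ᶠ[𝓝 x₀] (fun x => G ξ' ξ'' h x γ) := by
      have humem : ∀ᶠ x in 𝓝 x₀, x ∈ u := hu
      filter_upwards [humem] with x hx
      have := huv (Set.mk_mem_prod hx hγ)
      exact F_eq_G ξ' h x γ hξ'' this.1 this.2
    have hG := hasDerivAt_G_x ξ' h γ hξ'' hne hcond.1 hcond.2
    exact ((hG.congr_of_eventuallyEq hFx).deriv)
  have hg3 : HasDerivAt (fun γ => -x₀ / (ξ' + ξ'') + (x₀ + h * γ) / (2 * ξ'') -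
      Real.sqrt ((x₀ + h * γ) ^ 2 - 4 * ξ'') / (2 * ξ''))
      (0 + h * 1 / (2 * ξ'') -
        ((x₀ + h * γ₀) / Real.sqrt ((x₀ + h * γ₀) ^ 2 - 4 * ξ'') * (h * 1)) /
          (2 * ξ'')) γ₀ := by
    have ht4 := ((hasDerivAt_sqrt_quad (x₀ + h * γ₀) hs₀sq).comp γ₀ hiγ).div_const (2 * ξ'')
    simp only [Function.comp] at ht4
    exact (((hasDerivAt_const γ₀ (-x₀ / (ξ' + ξ''))).add (hiγ.div_const _)).sub ht4)
  have part4 : deriv (fun γ => deriv (fun x => F ξ' ξ'' h x γ) x₀) γ₀ =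
      -h / (h ^ 2 + ξ' - ξ'') := by
    rw [hmix.deriv_eq, hg3.deriv, hD₀, hs₀]
    field_simp
    ring
  refine ⟨part1, part2, part3, part4, ?_⟩
  rw [part2, part3, part4]
  field_simp
  ring
end
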